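/- If a, b ∈ ℂ with |a| = |b| = 1, then a² + 4ab + b² ≠ 0. -/

import Mathlib

theorem unimodular_a2_4ab_b2_ne_zero (a b : ℂ)
    (ha : ‖a‖ = 1) (hb : ‖b‖ = 1) :
    a ^ 2 + 4 * a * b + b ^ 2 ≠ 0 := by
  intro h
  have h1 : a * (starRingEnd ℂ) a = 1 := by
    rw [Complex.mul_conj, ← Complex.sq_norm, ha]; norm_num
  have h2 : b * (starRingEnd ℂ) b = 1 := by
    rw [Complex.mul_conj, ← Complex.sq_norm, hb]; norm_num
  have key : a * (starRingEnd ℂ) b + (starRingEnd ℂ) a * b + 4 = 0 := by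
    linear_combination ((starRingEnd ℂ) a * (starRingEnd ℂ) b) * h
      - (a * (starRingEnd ℂ) b + 4 * (b * (starRingEnd ℂ) b)) * h1
      - ((starRingEnd ℂ) a * b + 4) * h2
  have hre := congrArg Complex.re key
  have hconj : ((starRingEnd ℂ) a * b).re = (a * (starRingEnd ℂ) b).re := by
    have : (starRingEnd ℂ) a * b = (starRingEnd ℂ) (a * (starRingEnd ℂ) b) := by
      simp [map_mul]
    rw [this, Complex.conj_re]
  simp [Complex.add_re, hconj] at hre
  have habs : ‖a * (starRingEnd ℂ) b‖ = 1 := by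
    simp [map_mul, ha, hb]
  have hle := Complex.abs_re_le_norm (a * (starRingEnd ℂ) b)
  rw [habs, abs_le] at hle
  have hre' : (a * (starRingEnd ℂ) b).re = a.re * b.re + a.im * b.im := by
    simp [Complex.mul_re]
  rw [hre'] at hle
  linarith [hle.1, hle.2]
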